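/- Let τ be a positive-integer-valued random variable with E[τ²] < ∞ arising as the first regeneration time T of a split chain started from ν satisfying the small set condition. Then E_ν[T²] = E_ν[T]·(2 E_π[T] − 1), i.e., E_ν[T²]/E_ν[T] = 2 E_π[T] − 1. -/

import Mathlib

open MeasureTheory ProbabilityTheory ENNReal

noncomputable section

/-- Bernoulli measure on `Bool` with success probability `p`. -/
def bern (p : ℝ≥0∞) : Measure Bool :=
  p • Measure.dirac true + (1 - p) • Measure.dirac false

variable {𝓧 : Type*} [MeasurableSpace 𝓧]

/-- Probability of ringing the bell (regenerating) from state `x`. -/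
def regenProb (β : ℝ≥0∞) (J : Set 𝓧) (x : 𝓧) : ℝ≥0∞ := J.indicator (fun _ => β) x

/-- The normalized residKernel kernel `Q(x,·) = (P(x,·) - β 1_J(x) ν)/(1 - β 1_J(x))`. -/
def residKernel (P : Kernel 𝓧 𝓧) (β : ℝ≥0∞) (J : Set 𝓧) (ν : Measure 𝓧) (x : 𝓧) :
    Measure 𝓧 :=
  (1 - regenProb β J x)⁻¹ • (P x - regenProb β J x • ν)

/-- One step of the split chain on `𝓧 × Bool`: given `(x, b)`, the next state is drawn
from `ν` if `b = true` (regeneration) and from `Q(x,·)` otherwise; then the new bell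
variable is Bernoulli with probability `β 1_J` at the new state. -/
def splitStep (P : Kernel 𝓧 𝓧) (β : ℝ≥0∞) (J : Set 𝓧) (ν : Measure 𝓧)
    (s : 𝓧 × Bool) : Measure (𝓧 × Bool) :=
  (if s.2 then ν else residKernel P β J ν s.1).bind
    (fun y => (Measure.dirac y).prod (bern (regenProb β J y)))

/-- The initial distribution of the split chain when `X₀ ∼ ξ`. -/
def splitInit (β : ℝ≥0∞) (J : Set 𝓧) (ξ : Measure 𝓧) : Measure (𝓧 × Bool) :=
  ξ.bind (fun x => (Measure.dirac x).prod (bern (regenProb β J x)))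

/-- A split chain: a Markov kernel `P` with stationarity data, satisfying the one-step
small set (minorization) condition, together with the trajectory measures of the
associated split chain on `𝓧 × Bool` (Nummelin / Athreya–Ney construction). -/
structure SplitChain (𝓧 : Type*) [MeasurableSpace 𝓧] where
  P : Kernel 𝓧 𝓧
  β : ℝ≥0∞
  J : Set 𝓧
  ν : Measure 𝓧
  K : Kernel (𝓧 × Bool) (𝓧 × Bool)
  traj : Measure (𝓧 × Bool) → Measure (ℕ → 𝓧 × Bool)
  isMarkovP : IsMarkovKernel P
  probν : IsProbabilityMeasure ν
  measJ : MeasurableSet J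
  βpos : 0 < β
  βle : β ≤ 1
  small : ∀ x ∈ J, β • ν ≤ P x
  hK : ∀ s, K s = splitStep P β J ν s
  probTraj : ∀ μ, IsProbabilityMeasure μ → IsProbabilityMeasure (traj μ)
  h0 : ∀ μ, Measure.map (fun ω => ω 0) (traj μ) = μ
  hMarkov : ∀ μ (n : ℕ),
    Measure.map (fun ω => ((fun i : Fin (n + 1) => ω (i : ℕ)), ω (n + 1))) (traj μ)
      = (Measure.map (fun ω => fun i : Fin (n + 1) => ω (i : ℕ)) (traj μ)) ⊗ₘ
        (K.comap (fun v : Fin (n + 1) → 𝓧 × Bool => v (Fin.last n))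
          (measurable_pi_apply _))

namespace SplitChain

variable (sc : SplitChain 𝓧)

/-- The law of the split chain trajectory with initial distribution `X₀ ∼ ξ`. -/
def law (ξ : Measure 𝓧) : Measure (ℕ → 𝓧 × Bool) := sc.traj (splitInit sc.β sc.J ξ)

/-- The `𝓧`-valued coordinate process. -/
def X (n : ℕ) (ω : ℕ → 𝓧 × Bool) : 𝓧 := (ω n).1

/-- The first regeneration time `T := min {n ≥ 1 : Γ_{n-1} = 1}` (with the convention
`sInf ∅ = 0`). -/
def T (ω : ℕ → 𝓧 × Bool) : ℕ := sInf {n | 1 ≤ n ∧ (ω (n - 1)).2 = true}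

/-- The successive regeneration times `T_k`, with `T_0 := 0`. -/
def Tk (sc : SplitChain 𝓧) : ℕ → (ℕ → 𝓧 × Bool) → ℕ
  | 0, _ => 0
  | (k + 1), ω => sInf {n | Tk sc k ω < n ∧ (ω (n - 1)).2 = true}

/-- `R(n) := min {r ≥ 1 : T_r > n}`. -/
def R (n : ℕ) (ω : ℕ → 𝓧 × Bool) : ℕ := sInf {r | 1 ≤ r ∧ n < sc.Tk r ω}

end SplitChain

end


set_option linter.unusedSectionVars false

noncomputable section RegenAux
section Chunk1

variable {𝓧 : Type*} [MeasurableSpace 𝓧]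
variable (β : ℝ≥0∞) (J : Set 𝓧)

/-- survival density -/
def mfun (x : 𝓧) : ℝ≥0∞ := 1 - regenProb β J x

lemma regen_le_one (hβ : β ≤ 1) (x : 𝓧) : regenProb β J x ≤ 1 := by
  unfold regenProb
  by_cases h : x ∈ J
  · simpa [Set.indicator_of_mem h] using hβ
  · simp [Set.indicator_of_notMem h]

lemma measurable_regen (hJ : MeasurableSet J) : Measurable (regenProb β J) :=
  measurable_const.indicator hJ

lemma measurable_mfun (hJ : MeasurableSet J) : Measurable (mfun β J) :=
  measurable_const.sub (measurable_regen β J hJ)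

lemma mfun_add_regen (hβ : β ≤ 1) (x : 𝓧) : mfun β J x + regenProb β J x = 1 := by
  unfold mfun
  rw [tsub_add_cancel_of_le (regen_le_one β J hβ x)]

/-- the `m`-weighted measure -/
def Mw (μ : Measure 𝓧) : Measure 𝓧 := μ.withDensity (mfun β J)

lemma Mw_add (μ₁ μ₂ : Measure 𝓧) : Mw β J (μ₁ + μ₂) = Mw β J μ₁ + Mw β J μ₂ :=
  withDensity_add_measure μ₁ μ₂ _

lemma Mw_smul (c : ℝ≥0∞) (μ : Measure 𝓧) : Mw β J (c • μ) = c • Mw β J μ :=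
  withDensity_smul_measure c _

lemma mfun_eq : mfun β J = Set.indicator Jᶜ (fun _ => 1) + Set.indicator J (fun _ => 1 - β) := by
  funext x
  unfold mfun regenProb
  by_cases h : x ∈ J
  · simp [Set.indicator_of_mem h, Set.indicator_of_notMem (by simpa using h : x ∉ Jᶜ)]
  · simp [Set.indicator_of_notMem h, Set.indicator_of_mem (by simpa using h : x ∈ Jᶜ)]

lemma Mw_eq (hJ : MeasurableSet J) (μ : Measure 𝓧) :
    Mw β J μ = μ.restrict Jᶜ + (1 - β) • μ.restrict J := by
  unfold Mw
  rw [mfun_eq, withDensity_add_right _ (measurable_const.indicator hJ),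
    withDensity_indicator hJ.compl, withDensity_indicator hJ, withDensity_const,
    withDensity_const, one_smul]

lemma Mw_apply (hJ : MeasurableSet J) (μ : Measure 𝓧) {A : Set 𝓧} (hA : MeasurableSet A) :
    Mw β J μ A = μ (A ∩ Jᶜ) + (1 - β) * μ (A ∩ J) := by
  rw [Mw_eq β J hJ, Measure.add_apply, Measure.smul_apply,
    Measure.restrict_apply hA, Measure.restrict_apply hA, smul_eq_mul]

lemma Mw_univ_add (hβ : β ≤ 1) (hJ : MeasurableSet J) (μ : Measure 𝓧) :
    Mw β J μ Set.univ + β * μ J = μ Set.univ := by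
  rw [Mw_apply β J hJ μ MeasurableSet.univ, Set.univ_inter, Set.univ_inter, add_assoc]
  have h1 : (1 - β) * μ J + β * μ J = μ J := by
    rw [← add_mul, tsub_add_cancel_of_le hβ, one_mul]
  rw [h1]
  have := measure_add_measure_compl (μ := μ) hJ
  rw [← this, add_comm]


end Chunk1
section Chunk2
variable {𝓧 : Type*} [MeasurableSpace 𝓧]
variable (P : Kernel 𝓧 𝓧) (β : ℝ≥0∞) (J : Set 𝓧) (ν : Measure 𝓧)

lemma regen_of_mem {x : 𝓧} (hx : x ∈ J) : regenProb β J x = β := Set.indicator_of_mem hx _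
lemma regen_of_not_mem {x : 𝓧} (hx : x ∉ J) : regenProb β J x = 0 := Set.indicator_of_notMem hx _

lemma smul_regen_le (hsmall : ∀ x ∈ J, β • ν ≤ P x) (x : 𝓧) :
    regenProb β J x • ν ≤ P x := by
  by_cases hx : x ∈ J
  · rw [regen_of_mem β J hx]; exact hsmall x hx
  · rw [regen_of_not_mem β J hx, zero_smul]; exact Measure.zero_le _

theorem foo_fin (c : ℝ≥0∞) : True := trivial

lemma finiteRegenSmul (hβ : β ≤ 1) (hν : IsProbabilityMeasure ν) (x : 𝓧) :
    IsFiniteMeasure (regenProb β J x • ν) := by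
  constructor
  rw [Measure.smul_apply, smul_eq_mul, measure_univ, mul_one]
  exact lt_of_le_of_lt (regen_le_one β J hβ x) (by norm_num)

lemma resid_of_not_mem {x : 𝓧} (hx : x ∉ J) :
    residKernel P β J ν x = P x := by
  unfold residKernel
  rw [regen_of_not_mem β J hx]
  have h0 : (0 : ℝ≥0∞) • ν = 0 := by simp
  rw [h0]
  have h1 : P x - 0 = P x := by
    have h2 := Measure.sub_add_cancel_of_le (μ := P x) (ν := (0 : Measure 𝓧)) (Measure.zero_le _)
    rwa [add_zero] at h2
  rw [h1]
  simp

open scoped Classical in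
/-- the key sub-kernel evaluation -/
lemma resid_apply (hβ : β ≤ 1) (hJ : MeasurableSet J) (hP : IsMarkovKernel P)
    (hν : IsProbabilityMeasure ν) (hsmall : ∀ x ∈ J, β • ν ≤ P x)
    (x : 𝓧) {C : Set 𝓧} (hC : MeasurableSet C) :
    residKernel P β J ν x C
      = if x ∈ J then (1 - β)⁻¹ * (P x C - β * ν C) else P x C := by
  classical
  by_cases hx : x ∈ J
  · rw [if_pos hx]
    unfold residKernel
    rw [regen_of_mem β J hx, Measure.smul_apply, smul_eq_mul]
    haveI : IsFiniteMeasure (β • ν) := by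
      constructor; rw [Measure.smul_apply, smul_eq_mul, measure_univ, mul_one]
      exact lt_of_le_of_lt hβ (by norm_num)
    rw [Measure.sub_apply hC (hsmall x hx), Measure.smul_apply, smul_eq_mul]
  · rw [if_neg hx, resid_of_not_mem P β J ν hx]

/-- `mfun x • residKernel x = P x - regen x • ν`. -/
lemma mfun_smul_resid (hβ : β ≤ 1) (hP : IsMarkovKernel P)
    (hν : IsProbabilityMeasure ν) (hsmall : ∀ x ∈ J, β • ν ≤ P x) (x : 𝓧) :
    mfun β J x • residKernel P β J ν x = P x - regenProb β J x • ν := by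
  unfold residKernel mfun
  rw [smul_smul]
  by_cases hm : (1 : ℝ≥0∞) - regenProb β J x = 0
  · rw [hm, zero_mul, zero_smul]
    -- then regen x = 1, so β = 1 and x ∈ J, and P x = ν
    have hr1 : regenProb β J x = 1 := by
      have hle := regen_le_one β J hβ x
      have := tsub_eq_zero_iff_le.mp hm
      exact le_antisymm hle this
    have hxJ : x ∈ J := by
      by_contra hx
      rw [regen_of_not_mem β J hx] at hr1; simp at hr1
    have hβ1 : β = 1 := by rw [regen_of_mem β J hxJ] at hr1; exact hr1
    have hle : ν ≤ P x := by
      have := hsmall x hxJ; rwa [hβ1, one_smul] at this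
    have hPx : P x = ν := by
      haveI := hP.isProbabilityMeasure x
      ext s hs
      by_contra hne
      have hlt : ν s < P x s := lt_of_le_of_ne (hle s) (Ne.symm hne)
      have h2 : ν sᶜ ≤ P x sᶜ := hle sᶜ
      have : (1 : ℝ≥0∞) < 1 := by
        calc (1 : ℝ≥0∞) = ν s + ν sᶜ := by rw [measure_add_measure_compl hs, measure_univ]
        _ < P x s + P x sᶜ := by
            exact ENNReal.add_lt_add_of_lt_of_le (measure_ne_top _ _) hlt h2
        _ = 1 := by rw [measure_add_measure_compl hs, measure_univ]
      exact absurd this (lt_irrefl _)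
    rw [hr1, one_smul, hPx, Measure.sub_self]
  · have hfin : (1 : ℝ≥0∞) - regenProb β J x ≠ ⊤ := by
      exact ne_top_of_le_ne_top (by norm_num) (tsub_le_self)
    rw [ENNReal.mul_inv_cancel hm hfin, one_smul]
end Chunk2

section Chunk3
variable {𝓧 : Type*} [MeasurableSpace 𝓧]
variable (P : Kernel 𝓧 𝓧) (β : ℝ≥0∞) (J : Set 𝓧) (ν : Measure 𝓧)

/-- `Ghat x` is the defective transition measure tracking "no bell at the new state". -/
def Ghat (x : 𝓧) : Measure 𝓧 := Mw β J (residKernel P β J ν x)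

lemma Ghat_apply (hβ : β ≤ 1) (hJ : MeasurableSet J) (hP : IsMarkovKernel P)
    (hν : IsProbabilityMeasure ν) (hsmall : ∀ x ∈ J, β • ν ≤ P x)
    (x : 𝓧) {A : Set 𝓧} (hA : MeasurableSet A) :
    Ghat P β J ν x A
      = residKernel P β J ν x (A ∩ Jᶜ) + (1 - β) * residKernel P β J ν x (A ∩ J) :=
  Mw_apply β J hJ _ hA

lemma measurable_Ghat_apply (hβ : β ≤ 1) (hJ : MeasurableSet J) (hP : IsMarkovKernel P)
    (hν : IsProbabilityMeasure ν) (hsmall : ∀ x ∈ J, β • ν ≤ P x)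
    {A : Set 𝓧} (hA : MeasurableSet A) :
    Measurable (fun x => Ghat P β J ν x A) := by
  classical
  have hres : ∀ {C : Set 𝓧}, MeasurableSet C → Measurable (fun x => residKernel P β J ν x C) := by
    intro C hC
    have : (fun x => residKernel P β J ν x C)
        = fun x => if x ∈ J then (1 - β)⁻¹ * (P x C - β * ν C) else P x C := by
      funext x; exact resid_apply P β J ν hβ hJ hP hν hsmall x hC
    rw [this]
    exact Measurable.ite hJ ((measurable_const.mul ((P.measurable_coe hC).sub measurable_const)))
      (P.measurable_coe hC)
  have : (fun x => Ghat P β J ν x A)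
      = fun x => residKernel P β J ν x (A ∩ Jᶜ) + (1 - β) * residKernel P β J ν x (A ∩ J) := by
    funext x; exact Ghat_apply P β J ν hβ hJ hP hν hsmall x hA
  rw [this]
  exact (hres (hA.inter hJ.compl)).add (measurable_const.mul (hres (hA.inter hJ)))

lemma measurable_Ghat (hβ : β ≤ 1) (hJ : MeasurableSet J) (hP : IsMarkovKernel P)
    (hν : IsProbabilityMeasure ν) (hsmall : ∀ x ∈ J, β • ν ≤ P x) :
    Measurable (Ghat P β J ν) :=
  Measure.measurable_of_measurable_coe _
    (fun _ hA => measurable_Ghat_apply P β J ν hβ hJ hP hν hsmall hA)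

/-- key pointwise identity -/
lemma key_pointwise (hβ : β ≤ 1) (hJ : MeasurableSet J) (hP : IsMarkovKernel P)
    (hν : IsProbabilityMeasure ν) (hsmall : ∀ x ∈ J, β • ν ≤ P x)
    (x : 𝓧) {B : Set 𝓧} (hB : MeasurableSet B) :
    mfun β J x * Ghat P β J ν x B + regenProb β J x * Mw β J ν B
      = Mw β J (P x) B := by
  have h1 : mfun β J x * Ghat P β J ν x B = Mw β J (P x - regenProb β J x • ν) B := by
    unfold Ghat
    rw [← smul_eq_mul, ← Measure.smul_apply, ← Mw_smul,
      mfun_smul_resid P β J ν hβ hP hν hsmall]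
  have h2 : regenProb β J x * Mw β J ν B = Mw β J (regenProb β J x • ν) B := by
    rw [Mw_smul, Measure.smul_apply, smul_eq_mul]
  rw [h1, h2, ← Measure.add_apply, ← Mw_add]
  congr 2
  haveI := finiteRegenSmul β J ν hβ hν x
  exact Measure.sub_add_cancel_of_le (smul_regen_le P β J ν hsmall x)

/- ## Bernoulli / product step evaluations -/

instance bern_sfinite (p : ℝ≥0∞) : SFinite (bern p) := by unfold bern; infer_instance

lemma bern_apply (p : ℝ≥0∞) (B : Set Bool) :
    bern p B = p * B.indicator 1 true + (1 - p) * B.indicator 1 false := by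
  unfold bern
  rw [Measure.add_apply, Measure.smul_apply, Measure.smul_apply, smul_eq_mul, smul_eq_mul,
    Measure.dirac_apply, Measure.dirac_apply]

lemma bern_false (p : ℝ≥0∞) : bern p {false} = 1 - p := by
  rw [bern_apply]; simp

lemma bern_univ (p : ℝ≥0∞) (hp : p ≤ 1) : bern p Set.univ = 1 := by
  rw [bern_apply]; simpa using add_tsub_cancel_of_le hp

/-- measurability of the pair-step -/
lemma measurable_pairStep (hJ : MeasurableSet J) :
    Measurable (fun y : 𝓧 => (Measure.dirac y).prod (bern (regenProb β J y))) := by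
  apply Measure.measurable_of_measurable_coe
  intro s hs
  have heq : ∀ y : 𝓧, (Measure.dirac y).prod (bern (regenProb β J y)) s
      = regenProb β J y * Set.indicator {z : 𝓧 | (z, true) ∈ s} 1 y
        + (1 - regenProb β J y) * Set.indicator {z : 𝓧 | (z, false) ∈ s} 1 y := by
    intro y
    rw [Measure.dirac_prod, Measure.map_apply measurable_prodMk_left hs, bern_apply]
    congr 1
  simp_rw [heq]
  have h1 : MeasurableSet {z : 𝓧 | (z, true) ∈ s} :=
    (measurable_prodMk_right (y := true)) hs
  have h2 : MeasurableSet {z : 𝓧 | (z, false) ∈ s} :=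
    (measurable_prodMk_right (y := false)) hs
  exact ((measurable_regen β J hJ).mul (measurable_const.indicator h1)).add
    ((measurable_const.sub (measurable_regen β J hJ)).mul (measurable_const.indicator h2))

lemma bind_pair_apply (hβ : β ≤ 1) (hJ : MeasurableSet J) (ρ : Measure 𝓧)
    {A : Set 𝓧} {B : Set Bool} (hA : MeasurableSet A) :
    (ρ.bind (fun y => (Measure.dirac y).prod (bern (regenProb β J y)))) (A ×ˢ B)
      = ∫⁻ y in A, bern (regenProb β J y) B ∂ρ := by
  rw [Measure.bind_apply (hA.prod (MeasurableSet.of_discrete)) (measurable_pairStep β J hJ).aemeasurable]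
  have heq : ∀ y, ((Measure.dirac y).prod (bern (regenProb β J y))) (A ×ˢ B)
      = A.indicator (fun z => bern (regenProb β J z) B) y := by
    intro y
    rw [Measure.prod_prod, Measure.dirac_apply' _ hA]
    by_cases hy : y ∈ A
    · simp [Set.indicator_of_mem hy]
    · simp [Set.indicator_of_notMem hy]
  simp_rw [heq]
  exact lintegral_indicator hA _

lemma splitInit_prod (hβ : β ≤ 1) (hJ : MeasurableSet J) (ξ : Measure 𝓧)
    {A : Set 𝓧} {B : Set Bool} (hA : MeasurableSet A) :
    splitInit β J ξ (A ×ˢ B) = ∫⁻ y in A, bern (regenProb β J y) B ∂ξ :=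
  bind_pair_apply β J hβ hJ ξ hA

lemma splitInit_false (hβ : β ≤ 1) (hJ : MeasurableSet J) (ξ : Measure 𝓧)
    {A : Set 𝓧} (hA : MeasurableSet A) :
    splitInit β J ξ (A ×ˢ {false}) = Mw β J ξ A := by
  rw [splitInit_prod β J hβ hJ ξ hA, Mw, withDensity_apply _ hA]
  apply setLIntegral_congr_fun hA
  exact (fun y _ => bern_false _)

lemma splitInit_univ (hβ : β ≤ 1) (hJ : MeasurableSet J) (ξ : Measure 𝓧) :
    splitInit β J ξ Set.univ = ξ Set.univ := by
  rw [← Set.univ_prod_univ, splitInit_prod β J hβ hJ ξ MeasurableSet.univ]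
  have : ∀ y, y ∈ (Set.univ : Set 𝓧) → bern (regenProb β J y) Set.univ = 1 :=
    fun y _ => bern_univ _ (regen_le_one β J hβ y)
  rw [setLIntegral_congr_fun MeasurableSet.univ this]
  simp

lemma splitInit_isProb (hβ : β ≤ 1) (hJ : MeasurableSet J) (ξ : Measure 𝓧)
    [IsProbabilityMeasure ξ] : IsProbabilityMeasure (splitInit β J ξ) :=
  ⟨by rw [splitInit_univ β J hβ hJ ξ, measure_univ]⟩

lemma splitStep_false_prod (hβ : β ≤ 1) (hJ : MeasurableSet J)
    (x : 𝓧) {A : Set 𝓧} {B : Set Bool} (hA : MeasurableSet A) :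
    splitStep P β J ν (x, false) (A ×ˢ B)
      = ∫⁻ y in A, bern (regenProb β J y) B ∂(residKernel P β J ν x) := by
  unfold splitStep
  simp only [Bool.false_eq_true, if_false]
  exact bind_pair_apply β J hβ hJ _ hA

lemma splitStep_false_Ghat (hβ : β ≤ 1) (hJ : MeasurableSet J)
    (x : 𝓧) {A : Set 𝓧} (hA : MeasurableSet A) :
    splitStep P β J ν (x, false) (A ×ˢ {false}) = Ghat P β J ν x A := by
  rw [splitStep_false_prod P β J ν hβ hJ x hA, Ghat, Mw, withDensity_apply _ hA]
  apply setLIntegral_congr_fun hA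
  exact (fun y _ => bern_false _)

lemma resid_univ_le (hβ : β ≤ 1) (hJ : MeasurableSet J) (hP : IsMarkovKernel P)
    (hν : IsProbabilityMeasure ν) (hsmall : ∀ x ∈ J, β • ν ≤ P x) (x : 𝓧) :
    residKernel P β J ν x Set.univ ≤ 1 := by
  rw [resid_apply P β J ν hβ hJ hP hν hsmall x MeasurableSet.univ]
  by_cases hx : x ∈ J
  · rw [if_pos hx, measure_univ, measure_univ, mul_one]
    exact ENNReal.inv_mul_le_one _
  · rw [if_neg hx, measure_univ]

lemma splitStep_univ_le (hβ : β ≤ 1) (hJ : MeasurableSet J) (hP : IsMarkovKernel P)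
    (hν : IsProbabilityMeasure ν) (hsmall : ∀ x ∈ J, β • ν ≤ P x) (s : 𝓧 × Bool) :
    splitStep P β J ν s Set.univ ≤ 1 := by
  unfold splitStep
  rw [← Set.univ_prod_univ, bind_pair_apply β J hβ hJ _ MeasurableSet.univ]
  have : ∀ y, y ∈ (Set.univ : Set 𝓧) → bern (regenProb β J y) Set.univ = 1 :=
    fun y _ => bern_univ _ (regen_le_one β J hβ y)
  rw [setLIntegral_congr_fun MeasurableSet.univ this]
  simp only [Measure.restrict_univ, lintegral_one]
  by_cases hb : s.2
  · rw [if_pos hb, measure_univ]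
  · rw [if_neg hb]
    exact resid_univ_le P β J ν hβ hJ hP hν hsmall s.1
end Chunk3

section Chunk4
variable {𝓧 : Type*} [MeasurableSpace 𝓧]
variable (P : Kernel 𝓧 𝓧) (β : ℝ≥0∞) (J : Set 𝓧) (ν : Measure 𝓧)

/-- the sub-probability laws of the chain on the no-bell event -/
def sigmaM (ξ : Measure 𝓧) (n : ℕ) : Measure 𝓧 :=
  Nat.rec (Mw β J ξ) (fun _ μ => μ.bind (Ghat P β J ν)) n

@[simp] lemma sigmaM_zero (ξ : Measure 𝓧) : sigmaM P β J ν ξ 0 = Mw β J ξ := rfl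

@[simp] lemma sigmaM_succ (ξ : Measure 𝓧) (n : ℕ) :
    sigmaM P β J ν ξ (n + 1) = (sigmaM P β J ν ξ n).bind (Ghat P β J ν) := rfl

lemma bind_add_meas {α : Type*} [MeasurableSpace α] (μ₁ μ₂ : Measure α)
    {f : α → Measure 𝓧} (hf : Measurable f) :
    (μ₁ + μ₂).bind f = μ₁.bind f + μ₂.bind f := by
  ext B hB
  rw [Measure.add_apply, Measure.bind_apply hB hf.aemeasurable, Measure.bind_apply hB hf.aemeasurable,
    Measure.bind_apply hB hf.aemeasurable, lintegral_add_measure]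

lemma bind_smul_meas {α : Type*} [MeasurableSpace α] (c : ℝ≥0∞) (μ : Measure α)
    {f : α → Measure 𝓧} (hf : Measurable f) :
    (c • μ).bind f = c • μ.bind f := by
  ext B hB
  rw [Measure.smul_apply, Measure.bind_apply hB hf.aemeasurable, Measure.bind_apply hB hf.aemeasurable,
    lintegral_smul_measure, smul_eq_mul]

lemma bind_sum_meas {α : Type*} [MeasurableSpace α] (n : ℕ) (μ : ℕ → Measure α)
    {f : α → Measure 𝓧} (hf : Measurable f) :
    (∑ j ∈ Finset.range n, μ j).bind f = ∑ j ∈ Finset.range n, (μ j).bind f := by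
  induction n with
  | zero => simp [Measure.bind_zero_left]
  | succ n ih =>
      rw [Finset.sum_range_succ, Finset.sum_range_succ, bind_add_meas _ _ hf, ih]

/-- One-step invariance identity. -/
lemma bindGhat_Mw (hβ : β ≤ 1) (hJ : MeasurableSet J) (hP : IsMarkovKernel P)
    (hν : IsProbabilityMeasure ν) (hsmall : ∀ x ∈ J, β • ν ≤ P x)
    (π : Measure 𝓧) [IsProbabilityMeasure π] (hinv : π.bind (fun x => P x) = π) :
    (Mw β J π).bind (Ghat P β J ν) + (β * π J) • Mw β J ν = Mw β J π := by
  have hGmeas := measurable_Ghat P β J ν hβ hJ hP hν hsmall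
  ext B hB
  rw [Measure.add_apply, Measure.bind_apply hB hGmeas.aemeasurable, Measure.smul_apply, smul_eq_mul]
  have h1 : ∫⁻ x, Ghat P β J ν x B ∂(Mw β J π)
      = ∫⁻ x, mfun β J x * Ghat P β J ν x B ∂π := by
    unfold Mw
    rw [lintegral_withDensity_eq_lintegral_mul _ (measurable_mfun β J hJ)
      (measurable_Ghat_apply P β J ν hβ hJ hP hν hsmall hB)]
    rfl
  have hbindP : ∀ {C : Set 𝓧}, MeasurableSet C → ∫⁻ x, P x C ∂π = π C := by
    intro C hC
    conv_rhs => rw [← hinv]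
    rw [Measure.bind_apply hC P.measurable.aemeasurable]
  have h2 : ∫⁻ x, mfun β J x * Ghat P β J ν x B ∂π
        + ∫⁻ x, regenProb β J x * Mw β J ν B ∂π
      = ∫⁻ x, Mw β J (P x) B ∂π := by
    rw [← lintegral_add_left
      ((measurable_mfun β J hJ).fun_mul (measurable_Ghat_apply P β J ν hβ hJ hP hν hsmall hB))]
    apply lintegral_congr
    intro x
    exact key_pointwise P β J ν hβ hJ hP hν hsmall x hB
  have h3 : ∫⁻ x, regenProb β J x * Mw β J ν B ∂π = β * π J * Mw β J ν B := by
    rw [lintegral_mul_const _ (measurable_regen β J hJ)]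
    congr 1
    unfold regenProb
    rw [lintegral_indicator hJ, setLIntegral_const, mul_comm]
  have h4 : ∫⁻ x, Mw β J (P x) B ∂π = Mw β J π B := by
    have heq : ∀ x, Mw β J (P x) B = P x (B ∩ Jᶜ) + (1 - β) * P x (B ∩ J) :=
      fun x => Mw_apply β J hJ _ hB
    simp_rw [heq]
    rw [lintegral_add_left (P.measurable_coe (hB.inter hJ.compl)),
      lintegral_const_mul _ (P.measurable_coe (hB.inter hJ)),
      hbindP (hB.inter hJ.compl), hbindP (hB.inter hJ), Mw_apply β J hJ _ hB]
  rw [← h4, ← h2, h1, h3]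

/-- The discrete renewal/invariance identity. -/
lemma inv_identity (hβ : β ≤ 1) (hJ : MeasurableSet J) (hP : IsMarkovKernel P)
    (hν : IsProbabilityMeasure ν) (hsmall : ∀ x ∈ J, β • ν ≤ P x)
    (π : Measure 𝓧) [IsProbabilityMeasure π] (hinv : π.bind (fun x => P x) = π) (n : ℕ) :
    sigmaM P β J ν π n
        + (β * π J) • (∑ j ∈ Finset.range n, sigmaM P β J ν ν j) = Mw β J π := by
  have hGmeas := measurable_Ghat P β J ν hβ hJ hP hν hsmall
  induction n with
  | zero => simp
  | succ n ih =>
      have step := congrArg (fun μ : Measure 𝓧 => μ.bind (Ghat P β J ν)) ih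
      try simp only at step
      rw [bind_add_meas _ _ hGmeas, bind_smul_meas _ _ hGmeas, bind_sum_meas _ _ hGmeas]
        at step
      simp_rw [← sigmaM_succ] at step
      have hK3 := bindGhat_Mw P β J ν hβ hJ hP hν hsmall π hinv
      have key : sigmaM P β J ν π (n + 1)
          + (β * π J) • (∑ j ∈ Finset.range n, sigmaM P β J ν ν (j + 1))
          + (β * π J) • Mw β J ν = Mw β J π := by
        rw [step, hK3]
      rw [Finset.sum_range_succ', smul_add, ← add_assoc, ← sigmaM_zero (P := P) (ν := ν)]
      exact key
end Chunk4

end RegenAux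

noncomputable section Chunk5
open SplitChain
variable {𝓧 : Type*} [MeasurableSpace 𝓧] (sc : SplitChain 𝓧)

lemma law_def (ξ : Measure 𝓧) : sc.law ξ = sc.traj (splitInit sc.β sc.J ξ) := rfl

lemma K_finite : IsFiniteKernel sc.K :=
  ⟨⟨1, by norm_num, fun s => by
    rw [sc.hK]
    exact splitStep_univ_le sc.P sc.β sc.J sc.ν sc.βle sc.measJ sc.isMarkovP sc.probν
      sc.small s⟩⟩

lemma law_isProb (ξ : Measure 𝓧) [IsProbabilityMeasure ξ] :
    IsProbabilityMeasure (sc.law ξ) := by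
  haveI := splitInit_isProb sc.β sc.J sc.βle sc.measJ ξ
  exact sc.probTraj _ inferInstance

/-- all bells silent among the first `n+1` coordinates -/
def FF (n : ℕ) : Set (Fin (n + 1) → 𝓧 × Bool) := {v | ∀ i, (v i).2 = false}

lemma measurable_FF (n : ℕ) : MeasurableSet (FF (𝓧 := 𝓧) n) := by
  have h : FF (𝓧 := 𝓧) n = ⋂ i, (fun v : Fin (n+1) → 𝓧 × Bool => (v i).2) ⁻¹' {false} := by
    ext v; simp [FF]
  rw [h]
  exact MeasurableSet.iInter fun i => ((measurable_pi_apply i).snd) MeasurableSet.of_discrete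

lemma measurable_lastHead (n : ℕ) :
    Measurable (fun v : Fin (n+1) → 𝓧 × Bool => (v (Fin.last n)).1) :=
  (measurable_pi_apply _).fst

lemma main_induction (ξ : Measure 𝓧) [IsProbabilityMeasure ξ] (n : ℕ) :
    (((sc.law ξ).map (fun ω => fun i : Fin (n + 1) => ω (i : ℕ))).restrict (FF n)).map
      (fun v => (v (Fin.last n)).1)
    = sigmaM sc.P sc.β sc.J sc.ν ξ n := by
  have hβ := sc.βle; have hJ := sc.measJ; have hP := sc.isMarkovP
  have hν := sc.probν; have hsm := sc.small
  have hcoord : ∀ k : ℕ, Measurable (fun ω : ℕ → 𝓧 × Bool => ω k) :=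
    fun k => measurable_pi_apply k
  have hpre : ∀ m : ℕ, Measurable (fun ω : ℕ → 𝓧 × Bool => fun i : Fin (m + 1) => ω (i : ℕ)) :=
    fun m => measurable_pi_lambda _ fun i => measurable_pi_apply _
  induction n with
  | zero =>
    ext A hA
    rw [Measure.map_apply (measurable_lastHead 0) hA,
      Measure.restrict_apply ((measurable_lastHead 0) hA),
      Measure.map_apply (hpre 0)
        ((((measurable_lastHead 0) hA)).inter (measurable_FF 0))]
    have hset : (fun ω : ℕ → 𝓧 × Bool => fun i : Fin 1 => ω (i : ℕ)) ⁻¹'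
        (((fun v : Fin 1 → 𝓧 × Bool => (v (Fin.last 0)).1) ⁻¹' A) ∩ FF 0)
        = (fun ω : ℕ → 𝓧 × Bool => ω 0) ⁻¹' (A ×ˢ ({false} : Set Bool)) := by
      ext ω
      simp only [Set.mem_preimage, Set.mem_inter_iff, Set.mem_setOf_eq, FF, Set.mem_prod,
        Set.mem_singleton_iff]
      constructor
      · rintro ⟨h1, h2⟩
        exact ⟨by simpa using h1, by simpa using h2 0⟩
      · rintro ⟨h1, h2⟩
        refine ⟨by simpa using h1, ?_⟩
        intro i
        have hi : (i : ℕ) = 0 := by omega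
        simpa [hi] using h2
    rw [hset, ← Measure.map_apply (hcoord 0)
      (hA.prod (measurableSet_singleton false)), law_def, sc.h0, sigmaM_zero]
    exact splitInit_false sc.β sc.J hβ hJ ξ hA
  | succ n ih =>
    classical
    haveI := K_finite sc
    rw [law_def] at ih
    ext A hA
    rw [Measure.map_apply (measurable_lastHead (n+1)) hA,
      Measure.restrict_apply ((measurable_lastHead (n+1)) hA),
      Measure.map_apply (hpre (n+1))
        ((((measurable_lastHead (n+1)) hA)).inter (measurable_FF (n+1)))]
    have hpair : Measurable (fun ω : ℕ → 𝓧 × Bool =>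
        ((fun i : Fin (n + 1) => ω (i : ℕ)), ω (n + 1))) :=
      (hpre n).prod (hcoord (n+1))
    have hW : MeasurableSet ((FF (𝓧 := 𝓧) n) ×ˢ (A ×ˢ ({false} : Set Bool))) := by
      exact MeasurableSet.prod (measurable_FF n) (MeasurableSet.prod hA (measurableSet_singleton false))
    have hset : (fun ω : ℕ → 𝓧 × Bool => fun i : Fin (n + 2) => ω (i : ℕ)) ⁻¹'
        (((fun v : Fin (n+2) → 𝓧 × Bool => (v (Fin.last (n+1))).1) ⁻¹' A) ∩ FF (n+1))
        = (fun ω : ℕ → 𝓧 × Bool => ((fun i : Fin (n + 1) => ω (i : ℕ)), ω (n + 1))) ⁻¹'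
          ((FF (𝓧 := 𝓧) n) ×ˢ (A ×ˢ ({false} : Set Bool))) := by
      ext ω
      simp only [Set.mem_preimage, Set.mem_inter_iff, Set.mem_setOf_eq, FF, Set.mem_prod,
        Set.mem_singleton_iff, Fin.val_last]
      constructor
      · rintro ⟨h1, h2⟩
        refine ⟨fun i => by simpa using h2 ⟨i.1, by omega⟩, by simpa using h1,
          by simpa using h2 ⟨n+1, by omega⟩⟩
      · rintro ⟨h1, h2, h3⟩
        refine ⟨by simpa using h2, fun i => ?_⟩
        by_cases hi : (i : ℕ) < n + 1
        · simpa using h1 ⟨i.1, hi⟩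
        · have hieq : (i : ℕ) = n + 1 := by omega
          simpa [hieq] using h3
    rw [hset, ← Measure.map_apply hpair hW, law_def, sc.hMarkov]
    haveI : IsProbabilityMeasure ((sc.traj (splitInit sc.β sc.J ξ)).map
        (fun ω => fun i : Fin (n + 1) => ω (i : ℕ))) := by
      haveI : IsProbabilityMeasure (sc.traj (splitInit sc.β sc.J ξ)) := law_isProb sc ξ
      exact Measure.isProbabilityMeasure_map (Measurable.aemeasurable (hpre n))
    rw [Measure.compProd_apply hW]
    have hint : ∀ v : Fin (n+1) → 𝓧 × Bool,
        (sc.K.comap (fun v : Fin (n + 1) → 𝓧 × Bool => v (Fin.last n))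
          (measurable_pi_apply _)) v
          (Prod.mk v ⁻¹' ((FF (𝓧 := 𝓧) n) ×ˢ (A ×ˢ ({false} : Set Bool))))
        = Set.indicator (FF n)
            (fun v : Fin (n+1) → 𝓧 × Bool =>
              Ghat sc.P sc.β sc.J sc.ν ((v (Fin.last n)).1) A) v := by
      intro v
      rw [Kernel.comap_apply, Set.mk_preimage_prod_right_eq_if]
      by_cases hv : v ∈ FF n
      · rw [if_pos hv, Set.indicator_of_mem hv]
        have hvlast : v (Fin.last n) = ((v (Fin.last n)).1, false) := by
          have hb := hv (Fin.last n); exact Prod.ext rfl hb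
        conv_lhs => rw [sc.hK, hvlast]
        exact splitStep_false_Ghat sc.P sc.β sc.J sc.ν hβ hJ _ hA
      · rw [if_neg hv, Set.indicator_of_notMem hv, measure_empty]
    simp_rw [hint]
    rw [lintegral_indicator (measurable_FF n)]
    have hstep : ∫⁻ v in FF n, Ghat sc.P sc.β sc.J sc.ν ((v (Fin.last n)).1) A
        ∂((sc.traj (splitInit sc.β sc.J ξ)).map (fun ω => fun i : Fin (n + 1) => ω (i : ℕ)))
      = ∫⁻ x, Ghat sc.P sc.β sc.J sc.ν x A ∂(sigmaM sc.P sc.β sc.J sc.ν ξ n) := by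
      conv_rhs => rw [← ih]
      rw [lintegral_map (measurable_Ghat_apply _ _ _ _ hβ hJ hP hν hsm hA)
        (measurable_lastHead n)]
    rw [hstep, sigmaM_succ, Measure.bind_apply hA (measurable_Ghat _ _ _ _ hβ hJ hP hν hsm).aemeasurable]
end Chunk5


noncomputable section Chunk6
open SplitChain
variable {𝓧 : Type*} [MeasurableSpace 𝓧] (sc : SplitChain 𝓧)

def NN : Set (ℕ → 𝓧 × Bool) := {ω | ∀ n : ℕ, (ω n).2 = false}

lemma measurable_NN : MeasurableSet (NN (𝓧 := 𝓧)) := by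
  have h : NN (𝓧 := 𝓧) = ⋂ i : ℕ, (fun ω : ℕ → 𝓧 × Bool => (ω i).2) ⁻¹' {false} := by
    ext ω; simp [NN]
  rw [h]
  exact MeasurableSet.iInter fun i =>
    ((measurable_pi_apply i).snd) (measurableSet_singleton false)

def EN (n : ℕ) : Set (ℕ → 𝓧 × Bool) := {ω | ∀ i : ℕ, i ≤ n → (ω i).2 = false}

lemma measurable_EN (n : ℕ) : MeasurableSet (EN (𝓧 := 𝓧) n) := by
  have h : EN (𝓧 := 𝓧) n
      = ⋂ i : ℕ, ⋂ (_ : i ≤ n), (fun ω : ℕ → 𝓧 × Bool => (ω i).2) ⁻¹' {false} := by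
    ext ω; simp [EN]
  rw [h]
  exact MeasurableSet.iInter fun i => MeasurableSet.iInter fun _ =>
    ((measurable_pi_apply i).snd) (measurableSet_singleton false)

lemma EN_antitone : Antitone (EN (𝓧 := 𝓧)) := by
  intro m n hmn ω hω i hi
  exact hω i (le_trans hi hmn)

lemma iInter_EN : ⋂ n, EN (𝓧 := 𝓧) n = NN := by
  ext ω
  simp only [Set.mem_iInter, NN, EN, Set.mem_setOf_eq]
  exact ⟨fun h i => h i i le_rfl, fun h i j _ => h j⟩

lemma T_eq_zero_of_mem_NN {ω : ℕ → 𝓧 × Bool} (h : ω ∈ NN) : T ω = 0 := by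
  unfold SplitChain.T
  convert Nat.sInf_empty
  ext n
  simp only [Set.mem_setOf_eq, Set.mem_empty_iff_false, iff_false, not_and]
  intro _
  simp [h (n - 1)]

lemma T_mem_of_not_mem_NN {ω : ℕ → 𝓧 × Bool} (h : ω ∉ NN) :
    1 ≤ T ω ∧ (ω (T ω - 1)).2 = true := by
  have hex : ∃ m : ℕ, (ω m).2 = true := by
    by_contra hc
    push_neg at hc
    exact h (fun m => by simpa using hc m)
  obtain ⟨m, hm⟩ := hex
  have hne : {n : ℕ | 1 ≤ n ∧ (ω (n - 1)).2 = true}.Nonempty :=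
    ⟨m + 1, by simp [hm]⟩
  exact Nat.sInf_mem hne

lemma T_gt_succ_iff (k : ℕ) :
    {ω : ℕ → 𝓧 × Bool | k + 1 < T ω} = EN k \ NN := by
  ext ω
  simp only [Set.mem_setOf_eq, Set.mem_diff]
  constructor
  · intro hT
    have hnn : ω ∉ NN := by
      intro hmem
      rw [T_eq_zero_of_mem_NN hmem] at hT
      omega
    refine ⟨fun i hi => ?_, hnn⟩
    by_contra hb
    have hb' : (ω i).2 = true := by simpa using hb
    have hle : T ω ≤ i + 1 := by
      apply Nat.sInf_le
      refine ⟨by omega, by simpa using hb'⟩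
    omega
  · rintro ⟨hEN, hnn⟩
    obtain ⟨h1, h2⟩ := T_mem_of_not_mem_NN hnn
    by_contra hT
    push_neg at hT
    have hf : (ω (T ω - 1)).2 = false := hEN (T ω - 1) (by omega)
    rw [h2] at hf
    exact absurd hf (by simp)

lemma T_pos_iff : {ω : ℕ → 𝓧 × Bool | 0 < T ω} = (NN (𝓧 := 𝓧))ᶜ := by
  ext ω
  simp only [Set.mem_setOf_eq, Set.mem_compl_iff]
  constructor
  · intro hT hmem
    rw [T_eq_zero_of_mem_NN hmem] at hT
    omega
  · intro hnn
    have := (T_mem_of_not_mem_NN hnn).1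
    omega

lemma measurable_T_gt (k : ℕ) : MeasurableSet {ω : ℕ → 𝓧 × Bool | k < T ω} := by
  cases k with
  | zero => rw [T_pos_iff]; exact (measurable_NN).compl
  | succ k => rw [T_gt_succ_iff]; exact (measurable_EN k).diff measurable_NN

lemma law_EN (ξ : Measure 𝓧) [IsProbabilityMeasure ξ] (n : ℕ) :
    sc.law ξ (EN n) = sigmaM sc.P sc.β sc.J sc.ν ξ n Set.univ := by
  have hpre : Measurable (fun ω : ℕ → 𝓧 × Bool => fun i : Fin (n + 1) => ω (i : ℕ)) :=
    measurable_pi_lambda _ fun i => measurable_pi_apply _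
  rw [← main_induction sc ξ n,
    Measure.map_apply (measurable_lastHead n) MeasurableSet.univ,
    Measure.restrict_apply ((measurable_lastHead n) MeasurableSet.univ)]
  have h1 : (fun v : Fin (n+1) → 𝓧 × Bool => (v (Fin.last n)).1) ⁻¹' Set.univ
      ∩ FF (𝓧 := 𝓧) n = FF n := by simp
  rw [h1, Measure.map_apply hpre (measurable_FF n)]
  congr 1
  ext ω
  simp only [Set.mem_preimage, FF, EN, Set.mem_setOf_eq]
  exact ⟨fun h i => h i.1 (by omega), fun h i hi => h ⟨i, by omega⟩⟩

lemma law_T_gt_zero (ξ : Measure 𝓧) [IsProbabilityMeasure ξ]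
    (hN : sc.law ξ (NN (𝓧 := 𝓧)) = 0) :
    sc.law ξ {ω | 0 < T ω} = 1 := by
  haveI := law_isProb sc ξ
  rw [T_pos_iff, measure_compl measurable_NN (measure_ne_top _ _), hN, measure_univ, tsub_zero]

lemma law_T_gt_succ (ξ : Measure 𝓧) [IsProbabilityMeasure ξ]
    (hN : sc.law ξ (NN (𝓧 := 𝓧)) = 0) (k : ℕ) :
    sc.law ξ {ω | k + 1 < T ω} = sigmaM sc.P sc.β sc.J sc.ν ξ k Set.univ := by
  rw [T_gt_succ_iff, measure_diff_null hN, law_EN]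

/- ## moment formulas -/

lemma tsum_ite_lt (c : ℕ → ℝ≥0∞) (t : ℕ) :
    ∑' k : ℕ, (if k < t then c k else 0) = ∑ k ∈ Finset.range t, c k := by
  have h := tsum_eq_sum (L := SummationFilter.unconditional ℕ) (s := Finset.range t)
    (f := fun k : ℕ => if k < t then c k else 0) ?_
  · rw [h]
    apply Finset.sum_congr rfl
    intro k hk
    rw [Finset.mem_range] at hk
    rw [if_pos hk]
  · intro b hb
    rw [Finset.mem_range] at hb
    exact if_neg hb

lemma lint_T_count (μ : Measure (ℕ → 𝓧 × Bool)) (c : ℕ → ℝ≥0∞) (F : ℕ → ℝ≥0∞)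
    (hF : ∀ t : ℕ, F t = ∑ k ∈ Finset.range t, c k) :
    ∫⁻ ω, F (T ω) ∂μ = ∑' k : ℕ, c k * μ {ω | k < T ω} := by
  have hpt : ∀ ω : ℕ → 𝓧 × Bool, F (T ω)
      = ∑' k : ℕ, Set.indicator {ω' : ℕ → 𝓧 × Bool | k < T ω'} (fun _ => c k) ω := by
    intro ω
    have h2 : ∀ k : ℕ, Set.indicator {ω' : ℕ → 𝓧 × Bool | k < T ω'} (fun _ => c k) ω
        = if k < T ω then c k else 0 := by
      intro k
      by_cases h : k < T ω
      · rw [Set.indicator_of_mem (show ω ∈ {ω' : ℕ → 𝓧 × Bool | k < T ω'} from h), if_pos h]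
      · rw [Set.indicator_of_notMem (show ω ∉ {ω' : ℕ → 𝓧 × Bool | k < T ω'} from h), if_neg h]
    simp_rw [h2, tsum_ite_lt c (T ω)]
    exact hF (T ω)
  simp_rw [hpt]
  rw [lintegral_tsum (fun k => (measurable_const.indicator (measurable_T_gt k)).aemeasurable)]
  congr 1
  funext k
  rw [lintegral_indicator_const (measurable_T_gt k)]

lemma sum_odd_sq (t : ℕ) : ∑ k ∈ Finset.range t, (2 * (k : ℝ≥0∞) + 1) = (t : ℝ≥0∞) ^ 2 := by
  induction t with
  | zero => simp
  | succ t ih =>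
      rw [Finset.sum_range_succ, ih]
      push_cast
      ring

lemma lint_T (μ : Measure (ℕ → 𝓧 × Bool)) :
    ∫⁻ ω, (T ω : ℝ≥0∞) ∂μ = ∑' k : ℕ, μ {ω | k < T ω} := by
  have h := lint_T_count μ (fun _ => 1) (fun t => (t : ℝ≥0∞)) (by simp)
  simpa using h

lemma lint_T_sq (μ : Measure (ℕ → 𝓧 × Bool)) :
    ∫⁻ ω, ((T ω : ℝ≥0∞)) ^ 2 ∂μ
      = ∑' k : ℕ, (2 * (k : ℝ≥0∞) + 1) * μ {ω | k < T ω} :=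
  lint_T_count μ (fun k => 2 * (k : ℝ≥0∞) + 1) (fun t => (t : ℝ≥0∞) ^ 2)
    (fun t => (sum_odd_sq t).symm)

lemma measurable_T : Measurable (T (𝓧 := 𝓧)) := by
  apply measurable_to_countable
  intro y
  rcases Nat.eq_zero_or_pos (T y) with h0 | hpos
  · have hset : (T (𝓧 := 𝓧)) ⁻¹' {T y} = {ω : ℕ → 𝓧 × Bool | 0 < T ω}ᶜ := by
      ext ω
      simp only [Set.mem_preimage, Set.mem_singleton_iff, Set.mem_compl_iff,
        Set.mem_setOf_eq, h0]
      omega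
    rw [hset]
    exact (measurable_T_gt 0).compl
  · have hset : (T (𝓧 := 𝓧)) ⁻¹' {T y}
        = {ω : ℕ → 𝓧 × Bool | T y - 1 < T ω} \ {ω : ℕ → 𝓧 × Bool | T y < T ω} := by
      ext ω
      simp only [Set.mem_preimage, Set.mem_singleton_iff, Set.mem_diff, Set.mem_setOf_eq]
      omega
    rw [hset]
    have h1 := measurable_T_gt (𝓧 := 𝓧) (T y - 1)
    exact h1.diff (measurable_T_gt (T y))
end Chunk6


open SplitChain in
/-- For the first regeneration time `T` of a split chain started from the regeneration
measure `ν` (with `E_ν[T²] < ∞`), one has `E_ν[T²] = E_ν[T] · (2 E_π[T] − 1)`. -/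
theorem regeneration_time_second_moment {𝓧 : Type*} [MeasurableSpace 𝓧]
    (sc : SplitChain 𝓧) (π : Measure 𝓧) [IsProbabilityMeasure π]
    (hinv : π.bind (fun x => sc.P x) = π)
    (hHarris : ∀ ξ : Measure 𝓧, IsProbabilityMeasure ξ →
      sc.law ξ {ω | ∀ n : ℕ, (ω n).2 = false} = 0)
    (hT2 : Integrable (fun ω => (T ω : ℝ) ^ 2) (sc.law sc.ν))
    (hTπ : Integrable (fun ω => (T ω : ℝ)) (sc.law π)) :
    ∫ ω, (T ω : ℝ) ^ 2 ∂(sc.law sc.ν)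
      = (∫ ω, (T ω : ℝ) ∂(sc.law sc.ν)) * (2 * (∫ ω, (T ω : ℝ) ∂(sc.law π)) - 1) := by
  classical
  haveI hνp : IsProbabilityMeasure sc.ν := sc.probν
  haveI hlν : IsProbabilityMeasure (sc.law sc.ν) := law_isProb sc sc.ν
  haveI hlπ : IsProbabilityMeasure (sc.law π) := law_isProb sc π
  have hβ := sc.βle
  have hJ := sc.measJ
  have hPm := sc.isMarkovP
  have hsm := sc.small
  set a : ℕ → ℝ≥0∞ := fun n => sigmaM sc.P sc.β sc.J sc.ν sc.ν n Set.univ with ha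
  set b : ℕ → ℝ≥0∞ := fun n => sigmaM sc.P sc.β sc.J sc.ν π n Set.univ with hbdef
  set d : ℝ≥0∞ := sc.β * π sc.J with hd
  have hNν : sc.law sc.ν (NN (𝓧 := 𝓧)) = 0 := hHarris sc.ν hνp
  have hNπ : sc.law π (NN (𝓧 := 𝓧)) = 0 := hHarris π inferInstance
  set S : ℝ≥0∞ := ∑' n, a n with hS
  set U : ℝ≥0∞ := ∑' k : ℕ, ((k : ℝ≥0∞) + 1) * a k with hU
  set V : ℝ≥0∞ := ∑' n : ℕ, (2 * (n : ℝ≥0∞) + 3) * a n with hV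
  have hb_id : ∀ n : ℕ, b n + d * ∑ j ∈ Finset.range n, a j = Mw sc.β sc.J π Set.univ := by
    intro n
    have h := congrArg (fun μ : Measure 𝓧 => μ Set.univ)
      (inv_identity sc.P sc.β sc.J sc.ν hβ hJ hPm hνp hsm π hinv n)
    simp only [Measure.add_apply, Measure.smul_apply, smul_eq_mul,
      Measure.finset_sum_apply] at h
    exact h
  have hd1 : d ≤ 1 := by
    calc d ≤ 1 * 1 := mul_le_mul' hβ prob_le_one
    _ = 1 := one_mul 1
  have hdfin : d ≠ ⊤ := ne_top_of_le_ne_top (by norm_num) hd1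
  have hbtend : Filter.Tendsto b Filter.atTop (nhds 0) := by
    have h1 : b = fun n => sc.law π (EN (𝓧 := 𝓧) n) := by
      funext n
      exact (law_EN sc π n).symm
    have h2 := MeasureTheory.tendsto_measure_iInter_atTop (μ := sc.law π)
      (s := EN (𝓧 := 𝓧))
      (fun n => (measurable_EN n).nullMeasurableSet) EN_antitone
      ⟨0, measure_ne_top _ _⟩
    rw [iInter_EN, hNπ] at h2
    rw [h1]
    exact h2
  have hsumtend : Filter.Tendsto (fun n => ∑ j ∈ Finset.range n, a j)
      Filter.atTop (nhds S) := ENNReal.tendsto_nat_tsum a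
  have hdS : d * S = Mw sc.β sc.J π Set.univ := by
    have hconst : Filter.Tendsto (fun n => b n + d * ∑ j ∈ Finset.range n, a j)
        Filter.atTop (nhds (Mw sc.β sc.J π Set.univ)) := by
      simp_rw [hb_id]
      exact tendsto_const_nhds
    have hlim : Filter.Tendsto (fun n => b n + d * ∑ j ∈ Finset.range n, a j)
        Filter.atTop (nhds (0 + d * S)) :=
      hbtend.add (ENNReal.Tendsto.const_mul hsumtend (Or.inr hdfin))
    have h3 := tendsto_nhds_unique hlim hconst
    rwa [zero_add] at h3
  have hMw1 : Mw sc.β sc.J π Set.univ + d = 1 := by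
    have h4 := Mw_univ_add sc.β sc.J hβ hJ π
    rw [show π Set.univ = 1 from measure_univ] at h4
    exact h4
  have hdSd : d * S + d = 1 := by rw [hdS]; exact hMw1
  have hd0 : d ≠ 0 := by
    intro h
    rw [h] at hdSd
    simp at hdSd
  have hSfin : S ≠ ⊤ := by
    intro h
    rw [h, ENNReal.mul_top hd0] at hdSd
    simp at hdSd
  have htail : ∀ n : ℕ, b n = d * ∑' k : ℕ, (if n ≤ k then a k else 0) := by
    intro n
    have hsplit : S = (∑ j ∈ Finset.range n, a j) + ∑' k : ℕ, (if n ≤ k then a k else 0) := by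
      rw [hS]
      calc ∑' k, a k
          = ∑' k, ((if k < n then a k else 0) + (if n ≤ k then a k else 0)) := by
            apply tsum_congr
            intro k
            by_cases hk : k < n
            · rw [if_pos hk, if_neg (by omega), add_zero]
            · rw [if_neg hk, if_pos (by omega), zero_add]
        _ = (∑' k, (if k < n then a k else 0)) + ∑' k, (if n ≤ k then a k else 0) :=
            ENNReal.tsum_add
        _ = _ := by rw [tsum_ite_lt]
    have h1 := hb_id n
    rw [← hdS, hsplit, mul_add] at h1
    have hPfin : d * (∑ j ∈ Finset.range n, a j) ≠ ⊤ := by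
      refine ne_top_of_le_ne_top (show (1:ℝ≥0∞) ≠ ⊤ by norm_num) ?_
      calc d * (∑ j ∈ Finset.range n, a j) ≤ d * S := by
            apply mul_le_mul_right
            rw [hS]
            exact ENNReal.sum_le_tsum _
        _ ≤ d * S + d := le_self_add
        _ = 1 := hdSd
    rw [add_comm (d * (∑ j ∈ Finset.range n, a j))
      (d * ∑' k : ℕ, (if n ≤ k then a k else 0))] at h1
    exact (ENNReal.add_left_inj hPfin).mp h1
  have hWsum : ∑' n, b n = d * U := by
    calc ∑' n, b n = ∑' n, d * ∑' k : ℕ, (if n ≤ k then a k else 0) := tsum_congr htail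
      _ = d * ∑' n, ∑' k : ℕ, (if n ≤ k then a k else 0) := ENNReal.tsum_mul_left
      _ = d * ∑' k : ℕ, ∑' n : ℕ, (if n ≤ k then a k else 0) := by rw [ENNReal.tsum_comm]
      _ = d * U := by
          rw [hU]
          congr 1
          apply tsum_congr
          intro k
          calc ∑' n : ℕ, (if n ≤ k then a k else 0)
              = ∑' n : ℕ, (if n < k + 1 then a k else 0) := by
                apply tsum_congr
                intro n
                by_cases hn : n ≤ k
                · rw [if_pos hn, if_pos (by omega)]
                · rw [if_neg hn, if_neg (by omega)]
            _ = ∑ _j ∈ Finset.range (k+1), a k := tsum_ite_lt _ _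
            _ = ((k:ℝ≥0∞) + 1) * a k := by
                rw [Finset.sum_const, Finset.card_range, nsmul_eq_mul]
                push_cast
                ring
  have hVsplit : V = S + 2 * U := by
    rw [hV, hS, hU]
    calc ∑' n : ℕ, (2 * (n:ℝ≥0∞) + 3) * a n
        = ∑' n : ℕ, (a n + 2 * (((n:ℝ≥0∞) + 1) * a n)) := by
          apply tsum_congr
          intro n
          ring
      _ = (∑' n, a n) + ∑' n : ℕ, 2 * (((n:ℝ≥0∞) + 1) * a n) :=
          ENNReal.tsum_add
      _ = (∑' n, a n) + 2 * ∑' n : ℕ, ((n:ℝ≥0∞) + 1) * a n := by rw [ENNReal.tsum_mul_left]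
  -- moment identities
  have hIν : ∫⁻ ω, (T ω : ℝ≥0∞) ∂(sc.law sc.ν) = 1 + S := by
    rw [lint_T, tsum_eq_zero_add' ENNReal.summable, law_T_gt_zero sc sc.ν hNν, hS]
    congr 1
    exact tsum_congr (fun n => law_T_gt_succ sc sc.ν hNν n)
  have hIπ : ∫⁻ ω, (T ω : ℝ≥0∞) ∂(sc.law π) = 1 + d * U := by
    rw [lint_T, tsum_eq_zero_add' ENNReal.summable, law_T_gt_zero sc π hNπ]
    congr 1
    rw [← hWsum]
    exact tsum_congr (fun n => law_T_gt_succ sc π hNπ n)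
  have hI2 : ∫⁻ ω, ((T ω : ℝ≥0∞)) ^ 2 ∂(sc.law sc.ν) = 1 + V := by
    rw [lint_T_sq, tsum_eq_zero_add' ENNReal.summable]
    congr 1
    · rw [law_T_gt_zero sc sc.ν hNν]
      norm_num
    · rw [hV]
      apply tsum_congr
      intro n
      rw [law_T_gt_succ sc sc.ν hNν n]
      congr 1
      push_cast
      ring
  -- conversions between Bochner and lower integrals
  have hofr1 : ∀ ω : ℕ → 𝓧 × Bool, ENNReal.ofReal ((T ω : ℝ)) = (T ω : ℝ≥0∞) :=
    fun ω => ENNReal.ofReal_natCast _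
  have hofr2 : ∀ ω : ℕ → 𝓧 × Bool, ENNReal.ofReal ((T ω : ℝ) ^ 2) = (T ω : ℝ≥0∞) ^ 2 := by
    intro ω
    rw [ENNReal.ofReal_pow (by positivity), ENNReal.ofReal_natCast]
  have hmT : Measurable (fun ω : ℕ → 𝓧 × Bool => (T ω : ℝ)) :=
    measurable_from_top.comp measurable_T
  have hTint : Integrable (fun ω => (T ω : ℝ)) (sc.law sc.ν) := by
    refine hT2.mono hmT.aestronglyMeasurable (Filter.Eventually.of_forall fun ω => ?_)
    rw [Real.norm_of_nonneg (by positivity), Real.norm_of_nonneg (by positivity)]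
    exact_mod_cast Nat.le_self_pow (by norm_num) (T ω)
  have hconv1 : ∫ ω, (T ω : ℝ) ∂(sc.law sc.ν)
      = (∫⁻ ω, (T ω : ℝ≥0∞) ∂(sc.law sc.ν)).toReal := by
    rw [integral_eq_lintegral_of_nonneg_ae
      (Filter.Eventually.of_forall fun ω => by positivity) hTint.aestronglyMeasurable]
    congr 1
    exact lintegral_congr fun ω => hofr1 ω
  have hconvπ : ∫ ω, (T ω : ℝ) ∂(sc.law π)
      = (∫⁻ ω, (T ω : ℝ≥0∞) ∂(sc.law π)).toReal := by
    rw [integral_eq_lintegral_of_nonneg_ae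
      (Filter.Eventually.of_forall fun ω => by positivity) hTπ.aestronglyMeasurable]
    congr 1
    exact lintegral_congr fun ω => hofr1 ω
  have hconv2 : ∫ ω, (T ω : ℝ) ^ 2 ∂(sc.law sc.ν)
      = (∫⁻ ω, (T ω : ℝ≥0∞) ^ 2 ∂(sc.law sc.ν)).toReal := by
    rw [integral_eq_lintegral_of_nonneg_ae
      (Filter.Eventually.of_forall fun ω => by positivity) hT2.aestronglyMeasurable]
    congr 1
    exact lintegral_congr fun ω => hofr2 ω
  have hfin2 : (∫⁻ ω, (T ω : ℝ≥0∞) ^ 2 ∂(sc.law sc.ν)) ≠ ⊤ := by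
    have h := hT2.lintegral_lt_top
    rw [show ∫⁻ ω, ENNReal.ofReal ((T ω : ℝ) ^ 2) ∂(sc.law sc.ν)
        = ∫⁻ ω, (T ω : ℝ≥0∞) ^ 2 ∂(sc.law sc.ν) from lintegral_congr fun ω => hofr2 ω] at h
    exact h.ne
  have hVfin : V ≠ ⊤ := by
    rw [hI2] at hfin2
    exact (ENNReal.add_ne_top.mp hfin2).2
  have hUfin : U ≠ ⊤ := by
    refine ne_top_of_le_ne_top hVfin ?_
    rw [hVsplit]
    calc U ≤ 2 * U := by
          rw [two_mul]
          exact le_self_add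
      _ ≤ S + 2 * U := le_add_self
  have hdUfin : d * U ≠ ⊤ := ENNReal.mul_ne_top hdfin hUfin
  have h2Ufin : 2 * U ≠ ⊤ := ENNReal.mul_ne_top (by norm_num) hUfin
  have hSUfin : S + 2 * U ≠ ⊤ := ENNReal.add_ne_top.mpr ⟨hSfin, h2Ufin⟩
  have hdR : d.toReal * S.toReal + d.toReal = 1 := by
    have h := congrArg ENNReal.toReal hdSd
    rwa [ENNReal.toReal_add (ENNReal.mul_ne_top hdfin hSfin) hdfin, ENNReal.toReal_mul,
      ENNReal.toReal_one] at h
  rw [hconv2, hconv1, hconvπ, hI2, hIν, hIπ, hVsplit,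
    ENNReal.toReal_add ENNReal.one_ne_top hSUfin,
    ENNReal.toReal_add hSfin h2Ufin, ENNReal.toReal_mul,
    ENNReal.toReal_add ENNReal.one_ne_top hSfin,
    ENNReal.toReal_add ENNReal.one_ne_top hdUfin, ENNReal.toReal_mul,
    ENNReal.toReal_one, show ((2:ℝ≥0∞)).toReal = (2:ℝ) by norm_num]
  linear_combination (-2 * U.toReal) * hdR
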